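/- For every index k ≥ 1, the game G_S^k of the SCC family is a core extension of the core game G_C^k; hence the SCC family {G_S^k}_{k≥1} is a worst-case family. -/
import Mathlib


/-!
Formalization framework for parity games, the McNaughton-Zielonka Recursive
algorithm, the core family, core extensions, worst-case families, the induced
subgame tree, and the SCC family.
-/

universe u

/-- A parity game (as a plain structure): positions of player 0, positions of
player 1, a move relation and a priority function. -/
structure PGame (V : Type u) where
  Ps0 : Set V
  Ps1 : Set V
  Mv : V → V → Prop
  Pr : V → ℕ

namespace PGame

variable {V : Type u}

/-- The set of positions of a game. -/
def Ps (G : PGame V) : Set V := G.Ps0 ∪ G.Ps1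

/-- The positions owned by player `p` (players are identified with their parity). -/
def owner (G : PGame V) (p : ℕ) : Set V := if p % 2 = 0 then G.Ps0 else G.Ps1

/-- Well-formedness: disjoint finite position sets and a left-total move
relation contained in `Ps × Ps`. -/
def IsParityGame (G : PGame V) : Prop :=
  Disjoint G.Ps0 G.Ps1 ∧ G.Ps.Finite ∧
    (∀ v ∈ G.Ps, ∃ u ∈ G.Ps, G.Mv v u) ∧
    (∀ v u, G.Mv v u → v ∈ G.Ps ∧ u ∈ G.Ps)

/-- The `p`-predecessor operator:  positions from which player `p` can force
the game into `U` in one move. -/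
def pre (G : PGame V) (p : ℕ) (U : Set V) : Set V :=
  {v | v ∈ G.owner p ∧ ∃ u ∈ U, G.Mv v u} ∪
    {v | v ∈ G.owner (p + 1) ∧ ∀ u, G.Mv v u → u ∈ U}

/-- The monotone operator whose least fixpoint is the `p`-attractor of `T`. -/
def attrF (G : PGame V) (p : ℕ) (T : Set V) : Set V →o Set V :=
  ⟨fun A => T ∪ G.pre p A, by
    intro A B hAB v hv
    rcases hv with hv | hv
    · exact Or.inl hv
    · rcases hv with hv | hv
      · exact Or.inr (Or.inl ⟨hv.1, hv.2.imp fun u hu => ⟨hAB hu.1, hu.2⟩⟩)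
      · exact Or.inr (Or.inr ⟨hv.1, fun u hu => hAB (hv.2 u hu)⟩)⟩

/-- The `p`-attractor of `T` in `G`: the least fixpoint of the predecessor
operator extended with `T`. -/
def attr (G : PGame V) (p : ℕ) (T : Set V) : Set V := OrderHom.lfp (attrF G p T)

/-- The monotone operator whose greatest fixpoint is the position set of the
maximal subgame of `G` avoiding `X` (every kept position keeps a successor). -/
def keepF (G : PGame V) (X : Set V) : Set V →o Set V :=
  ⟨fun S => {v | v ∈ G.Ps ∧ v ∉ X ∧ ∃ u ∈ S, G.Mv v u}, by
    intro A B hAB v hv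
    exact ⟨hv.1, hv.2.1, hv.2.2.imp fun u hu => ⟨hAB hu.1, hu.2⟩⟩⟩

/-- The position set of the maximal subgame of `G` avoiding `X`. -/
def kept (G : PGame V) (X : Set V) : Set V := OrderHom.gfp (keepF G X)

/-- `G ∖ X`: the maximal subgame of `G` whose positions are contained in
`G.Ps \ X`; the move relation and ownership are restricted accordingly. -/
def rem (G : PGame V) (X : Set V) : PGame V where
  Ps0 := G.Ps0 ∩ G.kept X
  Ps1 := G.Ps1 ∩ G.kept X
  Mv := fun v u => G.Mv v u ∧ v ∈ G.kept X ∧ u ∈ G.kept X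
  Pr := G.Pr

/-- A play (infinite sequence of positions) is winning for player `p` if the
maximal priority occurring infinitely often along it has parity `p`. -/
def WinningPlay (G : PGame V) (p : ℕ) (π : ℕ → V) : Prop :=
  ∃ c : ℕ, (∀ n : ℕ, ∃ m, n ≤ m ∧ G.Pr (π m) = c) ∧
    (∀ c' : ℕ, (∀ n : ℕ, ∃ m, n ≤ m ∧ G.Pr (π m) = c') → c' ≤ c) ∧
    c % 2 = p % 2

/-- A play is consistent with the positional strategy `σ` of player `p` if at
`p`-positions it follows `σ`, and everywhere else it follows the move relation. -/
def PlayConsistent (G : PGame V) (p : ℕ) (σ : V → V) (π : ℕ → V) : Prop :=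
  ∀ i : ℕ, (π i ∈ G.owner p → π (i + 1) = σ (π i)) ∧
    (π i ∉ G.owner p → G.Mv (π i) (π (i + 1)))

/-- `D` is a `p`-dominion: player `p` has a positional strategy on `D` such
that every consistent play starting in `D` remains in `D` and is winning
for `p`. -/
def IsDominion (G : PGame V) (p : ℕ) (D : Set V) : Prop :=
  D ⊆ G.Ps ∧
    ∃ σ : V → V, (∀ v ∈ D ∩ G.owner p, G.Mv v (σ v) ∧ σ v ∈ D) ∧
      ∀ π : ℕ → V, π 0 ∈ D → PlayConsistent G p σ π →
        (∀ i, π i ∈ D) ∧ WinningPlay G p π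

/-- The winning region of player `p`: the maximal `p`-dominion, i.e. the union
of all `p`-dominions. -/
def winRegion (G : PGame V) (p : ℕ) : Set V := ⋃₀ {D | IsDominion G p D}

/-- Equality of games as games (position sets and moves coincide, and the
priority functions agree on the positions). -/
def GameEq (H K : PGame V) : Prop :=
  H.Ps0 = K.Ps0 ∧ H.Ps1 = K.Ps1 ∧ (∀ v u, H.Mv v u ↔ K.Mv v u) ∧
    ∀ v ∈ H.Ps, H.Pr v = K.Pr v

/-- `H` is a subgame of `G`: its positions form a subset of those of `G` and
its move relation, ownership assignment and priority function are the
restrictions of those of `G`. -/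
def IsSubgameOf (H G : PGame V) : Prop :=
  H.Ps ⊆ G.Ps ∧ H.Ps0 = G.Ps0 ∩ H.Ps ∧ H.Ps1 = G.Ps1 ∩ H.Ps ∧
    (∀ v u, H.Mv v u ↔ (G.Mv v u ∧ v ∈ H.Ps ∧ u ∈ H.Ps)) ∧
    ∀ v ∈ H.Ps, H.Pr v = G.Pr v

/-- The maximal priority occurring in `G`. -/
noncomputable def maxPr (G : PGame V) : ℕ := sSup (G.Pr '' G.Ps)

/-- The underlying directed graph of the game is strongly connected. -/
def StronglyConnected (G : PGame V) : Prop :=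
  ∀ u ∈ G.Ps, ∀ v ∈ G.Ps, Relation.ReflTransGen G.Mv u v

end PGame

open PGame

/-- The left-subgame function of the Recursive algorithm: remove the
`p`-attractor of the positions of maximal priority `m`, where `p = m mod 2`;
it returns the subgame together with the player `p`. -/
noncomputable def fL {V : Type u} (G : PGame V) : PGame V × ℕ :=
  (G.rem (G.attr (G.maxPr % 2) {v | v ∈ G.Ps ∧ G.Pr v = G.maxPr}), G.maxPr % 2)

/-- The right-subgame function of the Recursive algorithm: remove the
`q`-attractor of the set `W`. -/
def fR {V : Type u} (G : PGame V) (W : Set V) (q : ℕ) : PGame V := G.rem (G.attr q W)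

/-- `RecCall G H` holds iff `H` is the input of some (nested) recursive call
performed by the Recursive (McNaughton-Zielonka) algorithm run on `G`. -/
inductive RecCall {V : Type u} : PGame V → PGame V → Prop
  | left (G : PGame V) (h : G.Ps.Nonempty) : RecCall G (fL G).1
  | right (G : PGame V) (h : G.Ps.Nonempty)
      (hne : ¬ G.pre (G.maxPr % 2 + 1) ((fL G).1.winRegion (G.maxPr % 2 + 1)) ⊆
          (fL G).1.winRegion (G.maxPr % 2 + 1)) :
      RecCall G (fR G ((fL G).1.winRegion (G.maxPr % 2 + 1)) (G.maxPr % 2 + 1))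
  | trans {G H K : PGame V} : RecCall G H → RecCall H K → RecCall G K

/-- The positions of the core games: `α i`, `β i` and `γ i`. -/
inductive CorePos : Type
  | alpha : ℕ → CorePos
  | beta : ℕ → CorePos
  | gamma : ℕ → CorePos
  deriving DecidableEq

section Core

variable {X : Type}

/-- The position `α i` inside an ambient type extending the core positions. -/
def aP (i : ℕ) : CorePos ⊕ X := Sum.inl (CorePos.alpha i)

/-- The position `β i` inside an ambient type extending the core positions. -/
def bP (i : ℕ) : CorePos ⊕ X := Sum.inl (CorePos.beta i)

/-- The position `γ i` inside an ambient type extending the core positions. -/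
def cP (i : ℕ) : CorePos ⊕ X := Sum.inl (CorePos.gamma i)

/-- Player 0 positions of the core game `G_C^k`. -/
def corePs0 (k : ℕ) : Set (CorePos ⊕ X) :=
  {v | ∃ i, i ≤ 2 * k ∧
    ((i % 2 = 0 ∧ (v = aP i ∨ v = bP i)) ∨ (i % 2 = 1 ∧ v = cP i))}

/-- Player 1 positions of the core game `G_C^k`. -/
def corePs1 (k : ℕ) : Set (CorePos ⊕ X) :=
  {v | ∃ i, i ≤ 2 * k ∧
    ((i % 2 = 1 ∧ (v = aP i ∨ v = bP i)) ∨ (i % 2 = 0 ∧ v = cP i))}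

/-- The move relation of the core game `G_C^k`. -/
def coreMv (k : ℕ) : (CorePos ⊕ X) → (CorePos ⊕ X) → Prop := fun v u =>
  ∃ i, i ≤ 2 * k ∧
    ((v = aP i ∧ u = bP i) ∨
     (v = bP i ∧ u = cP i) ∨
     (v = bP i ∧ 0 < i ∧ u = aP (i - 1)) ∨
     (v = cP i ∧ u = cP i) ∨
     (v = cP i ∧ u = bP i) ∨
     (v = cP i ∧ i < 2 * k ∧ u = aP (i + 1)))

/-- The priority function of the core game `G_C^k`. -/
def corePr (k : ℕ) : (CorePos ⊕ X) → ℕ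
  | Sum.inl (CorePos.alpha i) => 2 * k + i + 1
  | Sum.inl (CorePos.beta i) => i
  | Sum.inl (CorePos.gamma i) => i
  | Sum.inr _ => 0

/-- The core game `G_C^k` (inside an arbitrary ambient position type). -/
def coreGame (k : ℕ) : PGame (CorePos ⊕ X) :=
  { Ps0 := corePs0 k, Ps1 := corePs1 k, Mv := coreMv k, Pr := corePr k }

/-- `G` is a core extension of `G_C^k`. -/
def IsCoreExtension (k : ℕ) (G : PGame (CorePos ⊕ X)) : Prop :=
  GameEq (G.rem {v | v ∈ G.Ps ∧ v ∉ (coreGame k (X := X)).Ps}) (coreGame k) ∧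
  (∀ v ∈ G.Ps, v ∉ (coreGame k (X := X)).Ps → G.Pr v < G.Pr (aP 0)) ∧
  (∀ i, i ≤ 2 * k → ∀ v ∈ G.Ps, v ∉ (coreGame k (X := X)).Ps →
      ¬ G.Mv (aP i) v ∧ ¬ G.Mv v (aP i) ∧ ¬ G.Mv (bP i) v ∧ ¬ G.Mv v (bP i)) ∧
  (∀ i, i ≤ 2 * k → ∀ v ∈ G.Ps, v ∉ (coreGame k (X := X)).Ps →
      G.Mv (cP i) v → v ∈ G.owner i ∧ G.Mv v (cP i) ∧ G.Pr v ≤ i)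

/-- A worst-case family: every member (with index `k ≥ 1`) is a parity game
which is a core extension of `G_C^k`. -/
def WorstCaseFamily (Gf : ℕ → PGame (CorePos ⊕ X)) : Prop :=
  ∀ k, 1 ≤ k → (Gf k).IsParityGame ∧ IsCoreExtension k (Gf k)

/-- Auxiliary definition of the subgames `G_w` of the induced subgame tree;
the sequence (`false` = L, `true` = R) is processed in reverse. -/
def subGAux (G0 : PGame (CorePos ⊕ X)) (k : ℕ) : List Bool → PGame (CorePos ⊕ X)
  | [] => G0
  | x :: r =>
    let Gw := subGAux G0 k r
    let hat :=
      if x then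
        Gw.rem (Gw.attr 0 ((Gw.rem (Gw.attr 1 {aP (2 * (k - r.length))})).winRegion 0))
      else
        Gw.rem (Gw.attr 1 {aP (2 * (k - r.length))})
    hat.rem (hat.attr 0 {aP (2 * (k - (r.length + 1)) + 1)})

/-- Auxiliary definition of the subgames `Ĝ_w` of the induced subgame tree;
the sequence is processed in reverse. -/
def hatAux (G0 : PGame (CorePos ⊕ X)) (k : ℕ) : List Bool → PGame (CorePos ⊕ X)
  | [] => G0
  | x :: r =>
    let Gw := subGAux G0 k r
    if x then
      Gw.rem (Gw.attr 0 ((Gw.rem (Gw.attr 1 {aP (2 * (k - r.length))})).winRegion 0))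
    else
      Gw.rem (Gw.attr 1 {aP (2 * (k - r.length))})

/-- The subgame `G_w^k` of the induced subgame tree of the family member `G0 = G^k`. -/
def treeG (G0 : PGame (CorePos ⊕ X)) (k : ℕ) (w : List Bool) : PGame (CorePos ⊕ X) :=
  subGAux G0 k w.reverse

/-- The subgame `Ĝ_w^k` of the induced subgame tree of the family member `G0 = G^k`. -/
def treeHatG (G0 : PGame (CorePos ⊕ X)) (k : ℕ) (w : List Bool) : PGame (CorePos ⊕ X) :=
  hatAux G0 k w.reverse

/-- Membership in the induced subgame tree `T_k`. -/
def InTree (G0 : PGame (CorePos ⊕ X)) (k : ℕ) (H : PGame (CorePos ⊕ X)) : Prop :=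
  (∃ w : List Bool, w.length ≤ k ∧ H = treeG G0 k w) ∨
    (∃ w : List Bool, w ≠ [] ∧ w.length ≤ k + 1 ∧ H = treeHatG G0 k w)

end Core

/-- The additional positions `δ_I^p` of the SCC family: an unordered pair of
indices together with a player (`false` = player 0, `true` = player 1). -/
abbrev DeltaPos : Type := Sym2 ℕ × Bool

/-- The ambient position type of the SCC family. -/
abbrev SPos : Type := CorePos ⊕ DeltaPos

/-- The parity associated with a boolean player. -/
def bval (b : Bool) : ℕ := if b then 1 else 0

/-- The positions `δ_I^p` actually present in `G_S^k`. -/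
def validDelta (k : ℕ) (d : DeltaPos) : Prop :=
  ∃ i j : ℕ, d.1 = s(i, j) ∧ i ≠ j ∧ i ≤ 2 * k ∧ j ≤ 2 * k ∧
    (i % 2 = j % 2 → bval d.2 = i % 2)

/-- The move relation of the SCC-family game `G_S^k`. -/
def sccMv (k : ℕ) : SPos → SPos → Prop := fun v u =>
  coreMv k v u ∨
  (∃ i, i ≤ 2 * k ∧ ∃ d : DeltaPos, validDelta k d ∧ i ∈ d.1 ∧ i % 2 = bval d.2 ∧
      ((v = cP i ∧ u = Sum.inr d) ∨ (v = Sum.inr d ∧ u = cP i))) ∨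
  (∃ d : DeltaPos, validDelta k d ∧ validDelta k (d.1, !d.2) ∧
      (∃ i j : ℕ, d.1 = s(i, j) ∧ i % 2 ≠ j % 2) ∧
      v = Sum.inr d ∧ u = Sum.inr (d.1, !d.2))

/-- The SCC-family game `G_S^k`. -/
def sccGame (k : ℕ) : PGame SPos :=
  { Ps0 := corePs0 k ∪ {v | ∃ d : DeltaPos, validDelta k d ∧ d.2 = false ∧ v = Sum.inr d},
    Ps1 := corePs1 k ∪ {v | ∃ d : DeltaPos, validDelta k d ∧ d.2 = true ∧ v = Sum.inr d},
    Mv := sccMv k,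
    Pr := corePr k }

section Aux
open PGame

/-- abbreviation for the core game inside the SCC ambient type -/
noncomputable def cg (k : ℕ) : PGame SPos := coreGame (X := DeltaPos) k

lemma mem_core_aP {k i : ℕ} (h : i ≤ 2*k) : (aP i : SPos) ∈ (cg k).Ps := by
  by_cases hp : i % 2 = 0
  · exact Or.inl ⟨i, h, Or.inl ⟨hp, Or.inl rfl⟩⟩
  · exact Or.inr ⟨i, h, Or.inl ⟨by omega, Or.inl rfl⟩⟩

lemma mem_core_bP {k i : ℕ} (h : i ≤ 2*k) : (bP i : SPos) ∈ (cg k).Ps := by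
  by_cases hp : i % 2 = 0
  · exact Or.inl ⟨i, h, Or.inl ⟨hp, Or.inr rfl⟩⟩
  · exact Or.inr ⟨i, h, Or.inl ⟨by omega, Or.inr rfl⟩⟩

lemma mem_core_cP {k i : ℕ} (h : i ≤ 2*k) : (cP i : SPos) ∈ (cg k).Ps := by
  by_cases hp : i % 2 = 0
  · exact Or.inr ⟨i, h, Or.inr ⟨hp, rfl⟩⟩
  · exact Or.inl ⟨i, h, Or.inr ⟨by omega, rfl⟩⟩

lemma inr_not_core {k : ℕ} (d : DeltaPos) : (Sum.inr d : SPos) ∉ (cg k).Ps := by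
  rintro (⟨i, _, ⟨_, h | h⟩ | ⟨_, h⟩⟩ | ⟨i, _, ⟨_, h | h⟩ | ⟨_, h⟩⟩) <;>
    simp [aP, bP, cP] at h

lemma core_subset_scc {k : ℕ} : (cg k).Ps ⊆ (sccGame k).Ps := by
  rintro v (h | h)
  · exact Or.inl (Or.inl h)
  · exact Or.inr (Or.inl h)

lemma delta_mem {k : ℕ} {d : DeltaPos} (hd : validDelta k d) :
    (Sum.inr d : SPos) ∈ (sccGame k).Ps := by
  cases hb : d.2
  · exact Or.inl (Or.inr ⟨d, hd, hb, rfl⟩)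
  · exact Or.inr (Or.inr ⟨d, hd, hb, rfl⟩)

lemma extra_char {k : ℕ} {v : SPos} (hv : v ∈ (sccGame k).Ps)
    (hnc : v ∉ (cg k).Ps) : ∃ d : DeltaPos, validDelta k d ∧ v = Sum.inr d := by
  rcases hv with (h | ⟨d, hd, _, rfl⟩) | (h | ⟨d, hd, _, rfl⟩)
  · exact absurd (Or.inl h) hnc
  · exact ⟨d, hd, rfl⟩
  · exact absurd (Or.inr h) hnc
  · exact ⟨d, hd, rfl⟩

lemma coreMv_mem {k : ℕ} {v u : SPos} (h : coreMv k v u) :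
    v ∈ (cg k).Ps ∧ u ∈ (cg k).Ps := by
  obtain ⟨i, hi, hc⟩ := h
  rcases hc with ⟨rfl, rfl⟩ | ⟨rfl, rfl⟩ | ⟨rfl, hpos, rfl⟩ | ⟨rfl, rfl⟩ | ⟨rfl, rfl⟩ |
    ⟨rfl, hlt, rfl⟩
  · exact ⟨mem_core_aP hi, mem_core_bP hi⟩
  · exact ⟨mem_core_bP hi, mem_core_cP hi⟩
  · exact ⟨mem_core_bP hi, mem_core_aP (by omega)⟩
  · exact ⟨mem_core_cP hi, mem_core_cP hi⟩
  · exact ⟨mem_core_cP hi, mem_core_bP hi⟩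
  · exact ⟨mem_core_cP hi, mem_core_aP (by omega)⟩

end Aux
section Aux2
open PGame

lemma sccMv_inl_inr {k : ℕ} {c : CorePos} {d : DeltaPos}
    (h : sccMv k (Sum.inl c) (Sum.inr d)) :
    ∃ i, c = CorePos.gamma i ∧ i ≤ 2*k ∧ validDelta k d ∧ i ∈ d.1 ∧ i % 2 = bval d.2 := by
  rcases h with hc | ⟨i, hi, d', hd', hmem, hpar, ⟨h1, h2⟩ | ⟨h1, h2⟩⟩ | ⟨d', _, _, _, h1, h2⟩
  · exact absurd (coreMv_mem hc).2 (inr_not_core d)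
  · obtain rfl : c = CorePos.gamma i := by simpa [cP] using h1
    obtain rfl : d' = d := by simpa using h2.symm
    exact ⟨i, rfl, hi, hd', hmem, hpar⟩
  · simp at h1
  · simp at h1

lemma sccMv_inr_inl {k : ℕ} {c : CorePos} {d : DeltaPos}
    (h : sccMv k (Sum.inr d) (Sum.inl c)) :
    ∃ i, c = CorePos.gamma i ∧ i ≤ 2*k ∧ validDelta k d ∧ i ∈ d.1 ∧ i % 2 = bval d.2 := by
  rcases h with hc | ⟨i, hi, d', hd', hmem, hpar, ⟨h1, h2⟩ | ⟨h1, h2⟩⟩ | ⟨d', _, _, _, h1, h2⟩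
  · exact absurd (coreMv_mem hc).1 (inr_not_core d)
  · simp [cP] at h1
  · obtain rfl : c = CorePos.gamma i := by simpa [cP] using h2
    obtain rfl : d' = d := by simpa using h1.symm
    exact ⟨i, rfl, hi, hd', hmem, hpar⟩
  · simp at h2

lemma core_succ {k : ℕ} {v : SPos} (hv : v ∈ (cg k).Ps) :
    ∃ u ∈ (cg k).Ps, coreMv k v u := by
  rcases hv with ⟨i, hi, ⟨_, rfl | rfl⟩ | ⟨_, rfl⟩⟩ | ⟨i, hi, ⟨_, rfl | rfl⟩ | ⟨_, rfl⟩⟩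
  · exact ⟨bP i, mem_core_bP hi, i, hi, Or.inl ⟨rfl, rfl⟩⟩
  · exact ⟨cP i, mem_core_cP hi, i, hi, Or.inr (Or.inl ⟨rfl, rfl⟩)⟩
  · exact ⟨cP i, mem_core_cP hi, i, hi, Or.inr (Or.inr (Or.inr (Or.inl ⟨rfl, rfl⟩)))⟩
  · exact ⟨bP i, mem_core_bP hi, i, hi, Or.inl ⟨rfl, rfl⟩⟩
  · exact ⟨cP i, mem_core_cP hi, i, hi, Or.inr (Or.inl ⟨rfl, rfl⟩)⟩
  · exact ⟨cP i, mem_core_cP hi, i, hi, Or.inr (Or.inr (Or.inr (Or.inl ⟨rfl, rfl⟩)))⟩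

lemma kept_eq (k : ℕ) :
    (sccGame k).kept {v | v ∈ (sccGame k).Ps ∧ v ∉ (cg k).Ps} = (cg k).Ps := by
  apply le_antisymm
  · intro v hv
    rw [PGame.kept, ← OrderHom.map_gfp (keepF _ _)] at hv
    obtain ⟨hPs, hnX, -⟩ := hv
    by_contra hc
    exact hnX ⟨hPs, hc⟩
  · apply OrderHom.le_gfp
    intro v hv
    obtain ⟨u, hu, hmu⟩ := core_succ hv
    exact ⟨core_subset_scc hv, fun hx => hx.2 hv, u, hu, Or.inl hmu⟩

end Aux2
section Aux3
open PGame

lemma scc_gameEq (k : ℕ) :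
    GameEq ((sccGame k).rem {v | v ∈ (sccGame k).Ps ∧ v ∉ (cg k).Ps}) (cg k) := by
  refine ⟨?_, ?_, ?_, fun v _ => rfl⟩
  · show (sccGame k).Ps0 ∩ (sccGame k).kept _ = (cg k).Ps0
    rw [kept_eq]
    ext v
    constructor
    · rintro ⟨h | ⟨d, hd, _, rfl⟩, hc⟩
      · exact h
      · exact absurd hc (inr_not_core d)
    · intro h; exact ⟨Or.inl h, Or.inl h⟩
  · show (sccGame k).Ps1 ∩ (sccGame k).kept _ = (cg k).Ps1
    rw [kept_eq]
    ext v
    constructor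
    · rintro ⟨h | ⟨d, hd, _, rfl⟩, hc⟩
      · exact h
      · exact absurd hc (inr_not_core d)
    · intro h; exact ⟨Or.inl h, Or.inr h⟩
  · intro v u
    show (sccMv k v u ∧ v ∈ (sccGame k).kept _ ∧ u ∈ (sccGame k).kept _) ↔ coreMv k v u
    rw [kept_eq]
    constructor
    · rintro ⟨hm, hv, hu⟩
      rcases hm with hc | ⟨i, hi, d, hd, hmem, hpar, ⟨h1, h2⟩ | ⟨h1, h2⟩⟩ |
        ⟨d, _, _, _, h1, h2⟩
      · exact hc
      · exact absurd (h2 ▸ hu) (inr_not_core d)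
      · exact absurd (h1 ▸ hv) (inr_not_core d)
      · exact absurd (h1 ▸ hv) (inr_not_core d)
    · intro h
      exact ⟨Or.inl h, (coreMv_mem h).1, (coreMv_mem h).2⟩

lemma scc_isCoreExtension (k : ℕ) : IsCoreExtension k (sccGame k) := by
  refine ⟨scc_gameEq k, ?_, ?_, ?_⟩
  · intro v hv hnc
    obtain ⟨d, hd, rfl⟩ := extra_char hv hnc
    show corePr k (Sum.inr d : SPos) < corePr k (aP 0 : SPos)
    simp [corePr, aP]
  · intro i hi v hv hnc
    obtain ⟨d, hd, rfl⟩ := extra_char hv hnc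
    refine ⟨?_, ?_, ?_, ?_⟩
    · intro h
      obtain ⟨j, hj, -⟩ := sccMv_inl_inr h
      simp [aP] at hj
    · intro h
      obtain ⟨j, hj, -⟩ := sccMv_inr_inl h
      simp [aP] at hj
    · intro h
      obtain ⟨j, hj, -⟩ := sccMv_inl_inr h
      simp [bP] at hj
    · intro h
      obtain ⟨j, hj, -⟩ := sccMv_inr_inl h
      simp [bP] at hj
  · intro i hi v hv hnc hmv
    obtain ⟨d, hd, rfl⟩ := extra_char hv hnc
    obtain ⟨j, hj, hjk, hvd, hmem, hpar⟩ := sccMv_inl_inr hmv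
    obtain rfl : j = i := by simpa [cP, eq_comm] using hj
    refine ⟨?_, ?_, ?_⟩
    · show (Sum.inr d : SPos) ∈ if j % 2 = 0 then (sccGame k).Ps0 else (sccGame k).Ps1
      by_cases hp : j % 2 = 0
      · have hb : d.2 = false := by
          cases hbb : d.2
          · rfl
          · rw [hbb] at hpar; simp [bval] at hpar; omega
        rw [if_pos hp]
        exact Or.inr ⟨d, hvd, hb, rfl⟩
      · have hb : d.2 = true := by
          cases hbb : d.2
          · rw [hbb] at hpar; simp [bval] at hpar; omega
          · rfl
        rw [if_neg hp]
        exact Or.inr ⟨d, hvd, hb, rfl⟩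
    · exact Or.inr (Or.inl ⟨j, hjk, d, hvd, hmem, hpar, Or.inr ⟨rfl, rfl⟩⟩)
    · exact Nat.zero_le j

end Aux3
section Aux4
open PGame

lemma scc_disjoint (k : ℕ) : Disjoint (sccGame k).Ps0 (sccGame k).Ps1 := by
  rw [Set.disjoint_left]
  rintro v (h0 | ⟨d, hd, hb, rfl⟩) (h1 | ⟨d', hd', hb', he⟩)
  · obtain ⟨i, hi, ⟨hp, rfl | rfl⟩ | ⟨hp, rfl⟩⟩ := h0 <;>
      obtain ⟨j, hj, ⟨hq, h | h⟩ | ⟨hq, h⟩⟩ := h1 <;>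
      simp_all [aP, bP, cP] <;> omega
  · subst he; exact inr_not_core d' (Or.inl h0)
  · exact inr_not_core d (Or.inr h1)
  · obtain rfl : d = d' := by simpa [eq_comm] using he
    rw [hb] at hb'; exact Bool.false_ne_true hb'

lemma scc_finite (k : ℕ) : (sccGame k).Ps.Finite := by
  have hfin : (Set.Iic (2*k) ×ˢ (Set.Iic (2*k) ×ˢ (Set.univ : Set (Fin 5)))).Finite :=
    (Set.finite_Iic _).prod ((Set.finite_Iic _).prod Set.finite_univ)
  apply Set.Finite.subset (hfin.image (fun p : ℕ × ℕ × Fin 5 =>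
    if p.2.2.val = 0 then aP p.1 else if p.2.2.val = 1 then bP p.1
    else if p.2.2.val = 2 then cP p.1
    else if p.2.2.val = 3 then Sum.inr (s(p.1, p.2.1), false)
    else Sum.inr (s(p.1, p.2.1), true)))
  have hdelta : ∀ d : DeltaPos, validDelta k d → (Sum.inr d : SPos) ∈
      (fun p : ℕ × ℕ × Fin 5 =>
        if p.2.2.val = 0 then (aP p.1 : SPos) else if p.2.2.val = 1 then bP p.1
        else if p.2.2.val = 2 then cP p.1
        else if p.2.2.val = 3 then Sum.inr (s(p.1, p.2.1), false)
        else Sum.inr (s(p.1, p.2.1), true)) ''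
      (Set.Iic (2*k) ×ˢ (Set.Iic (2*k) ×ˢ (Set.univ : Set (Fin 5)))) := by
    rintro ⟨q, b⟩ ⟨i, j, hq, hne, hi, hj, hpar⟩
    cases b
    · refine ⟨(i, j, (3 : Fin 5)), ⟨hi, hj, trivial⟩, ?_⟩
      have hq' : q = s(i, j) := hq
      subst hq'; rfl
    · refine ⟨(i, j, (4 : Fin 5)), ⟨hi, hj, trivial⟩, ?_⟩
      have hq' : q = s(i, j) := hq
      subst hq'; rfl
  rintro v ((h | ⟨d, hd, _, rfl⟩) | (h | ⟨d, hd, _, rfl⟩))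
  · obtain ⟨i, hi, ⟨hp, rfl | rfl⟩ | ⟨hp, rfl⟩⟩ := h
    · exact ⟨(i, 0, (0 : Fin 5)), ⟨hi, Nat.zero_le _, trivial⟩, by simp⟩
    · exact ⟨(i, 0, (1 : Fin 5)), ⟨hi, Nat.zero_le _, trivial⟩, by simp⟩
    · exact ⟨(i, 0, (2 : Fin 5)), ⟨hi, Nat.zero_le _, trivial⟩, by simp⟩
  · exact hdelta d hd
  · obtain ⟨i, hi, ⟨hp, rfl | rfl⟩ | ⟨hp, rfl⟩⟩ := h
    · exact ⟨(i, 0, (0 : Fin 5)), ⟨hi, Nat.zero_le _, trivial⟩, by simp⟩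
    · exact ⟨(i, 0, (1 : Fin 5)), ⟨hi, Nat.zero_le _, trivial⟩, by simp⟩
    · exact ⟨(i, 0, (2 : Fin 5)), ⟨hi, Nat.zero_le _, trivial⟩, by simp⟩
  · exact hdelta d hd

lemma scc_leftTotal (k : ℕ) : ∀ v ∈ (sccGame k).Ps, ∃ u ∈ (sccGame k).Ps, (sccGame k).Mv v u := by
  intro v hv
  rcases hv with (h | ⟨d, hd, _, rfl⟩) | (h | ⟨d, hd, _, rfl⟩)
  · obtain ⟨u, hu, hm⟩ := core_succ (Or.inl h)
    exact ⟨u, core_subset_scc hu, Or.inl hm⟩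
  · obtain ⟨q, b⟩ := d
    obtain ⟨i, j, hq, hne, hi, hj, hpar⟩ := hd
    by_cases hp : i % 2 = bval b
    · refine ⟨cP i, core_subset_scc (mem_core_cP hi),
        Or.inr (Or.inl ⟨i, hi, (q, b), ⟨i, j, hq, hne, hi, hj, hpar⟩, ?_, hp, Or.inr ⟨rfl, rfl⟩⟩)⟩
      rw [hq]; exact Sym2.mem_mk_left i j
    · have hp2 : j % 2 = bval b := by
        have h1 : i % 2 = j % 2 → bval (q, b).2 = i % 2 := hpar
        have hb : bval b = 0 ∨ bval b = 1 := by cases b <;> simp [bval]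
        rcases hb with hb | hb <;> simp [hb] at h1 hp ⊢ <;> omega
      refine ⟨cP j, core_subset_scc (mem_core_cP hj),
        Or.inr (Or.inl ⟨j, hj, (q, b), ⟨i, j, hq, hne, hi, hj, hpar⟩, ?_, hp2, Or.inr ⟨rfl, rfl⟩⟩)⟩
      rw [hq]; exact Sym2.mem_mk_right i j
  · obtain ⟨u, hu, hm⟩ := core_succ (Or.inr h)
    exact ⟨u, core_subset_scc hu, Or.inl hm⟩
  · obtain ⟨q, b⟩ := d
    obtain ⟨i, j, hq, hne, hi, hj, hpar⟩ := hd
    by_cases hp : i % 2 = bval b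
    · refine ⟨cP i, core_subset_scc (mem_core_cP hi),
        Or.inr (Or.inl ⟨i, hi, (q, b), ⟨i, j, hq, hne, hi, hj, hpar⟩, ?_, hp, Or.inr ⟨rfl, rfl⟩⟩)⟩
      rw [hq]; exact Sym2.mem_mk_left i j
    · have hp2 : j % 2 = bval b := by
        have h1 : i % 2 = j % 2 → bval (q, b).2 = i % 2 := hpar
        have hb : bval b = 0 ∨ bval b = 1 := by cases b <;> simp [bval]
        rcases hb with hb | hb <;> simp [hb] at h1 hp ⊢ <;> omega
      refine ⟨cP j, core_subset_scc (mem_core_cP hj),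
        Or.inr (Or.inl ⟨j, hj, (q, b), ⟨i, j, hq, hne, hi, hj, hpar⟩, ?_, hp2, Or.inr ⟨rfl, rfl⟩⟩)⟩
      rw [hq]; exact Sym2.mem_mk_right i j

lemma scc_mv_mem (k : ℕ) : ∀ v u, (sccGame k).Mv v u → v ∈ (sccGame k).Ps ∧ u ∈ (sccGame k).Ps := by
  intro v u h
  rcases h with hc | ⟨i, hi, d, hd, hmem, hpar, ⟨rfl, rfl⟩ | ⟨rfl, rfl⟩⟩ |
    ⟨d, hd, hd2, _, rfl, rfl⟩
  · exact ⟨core_subset_scc (coreMv_mem hc).1, core_subset_scc (coreMv_mem hc).2⟩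
  · exact ⟨core_subset_scc (mem_core_cP hi), delta_mem hd⟩
  · exact ⟨delta_mem hd, core_subset_scc (mem_core_cP hi)⟩
  · exact ⟨delta_mem hd, delta_mem hd2⟩

lemma scc_isParityGame (k : ℕ) : (sccGame k).IsParityGame :=
  ⟨scc_disjoint k, scc_finite k, scc_leftTotal k, scc_mv_mem k⟩

end Aux4
/-- For every `k ≥ 1`, the game `G_S^k` of the SCC family is a core extension
of the core game `G_C^k`; hence the SCC family is a worst-case family. -/
theorem stmt12 :
    (∀ k, 1 ≤ k → IsCoreExtension k (sccGame k)) ∧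
    WorstCaseFamily (fun k => sccGame k) :=
  ⟨fun k _ => scc_isCoreExtension k,
   fun k _ => ⟨scc_isParityGame k, scc_isCoreExtension k⟩⟩
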